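/- Under the assumptions below, for every s with 0 < s < 1 the product P(s) := ∏_{i=1}^{n−1} (1 − (λₙ/λᵢ)s) is a positive real number, and for every integer k ≥ 1 one has ∫₀^{λₙ} (−f(t))^{k/N} dt/t = ((−1)^{n−1}λ₁⋯λₙ · λₙ)^{k/N} · ∫₀¹ s^{k/N − 1} (1−s)^{k/N} P(s)^{k/N} ds. -/

import Mathlib

open scoped BigOperators
open MeasureTheory Real Set

/-- The substitution `t = λₙ·s` in the proof of Theorem 4.2: for `0 < s < 1` the
product `P(s) = ∏_{i≠n} (1 − (λₙ/λᵢ)s)` is a positive real number, and for every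
`k ≥ 1`,
`∫₀^{λₙ} (−f(t))^{k/N} dt/t
  = ((−1)^{n−1}λ₁⋯λₙ·λₙ)^{k/N}·∫₀¹ s^{k/N−1}(1−s)^{k/N}P(s)^{k/N} ds`. -/
theorem stmt9 (N n : ℕ) (hN : 2 ≤ N) (hn : 1 ≤ n)
    (lam : Fin n → ℂ) (hne : ∀ i, lam i ≠ 0) (hinj : Function.Injective lam)
    (f : ℝ → ℝ) (hf : ∀ t : ℝ, (f t : ℂ) = (t : ℂ) * ∏ i, ((t : ℂ) - lam i))
    (ln : ℝ) (hlam : lam ⟨n - 1, by omega⟩ = (ln : ℂ)) (hln0 : 0 < ln) (hln1 : ln < 1)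
    (hother : ∀ i : Fin n, i ≠ ⟨n - 1, by omega⟩ →
      ∀ r : ℝ, lam i = (r : ℂ) → ¬(0 < r ∧ r < 1))
    (hbound : ∀ t : ℝ, 0 ≤ t → t < 1 → |f t| < 1) (hf1 : 0 < f 1)
    (c : ℝ) (hc0 : 0 < c) (hc : (c : ℂ) = (-1 : ℂ) ^ (n - 1) * ∏ i, lam i) :
    (∀ s : ℝ, 0 < s → s < 1 →
      (∏ i ∈ Finset.univ.erase (⟨n - 1, by omega⟩ : Fin n),
          ((1 : ℂ) - ((ln : ℂ) / lam i) * (s : ℂ))).im = 0 ∧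
      0 < (∏ i ∈ Finset.univ.erase (⟨n - 1, by omega⟩ : Fin n),
          ((1 : ℂ) - ((ln : ℂ) / lam i) * (s : ℂ))).re) ∧
    ∀ k : ℕ, 1 ≤ k →
      (∫ t in Set.Ioo 0 ln, (-f t) ^ ((k : ℝ) / (N : ℝ)) / t) =
        (c * ln) ^ ((k : ℝ) / (N : ℝ)) *
          ∫ s in Set.Ioo (0 : ℝ) 1,
            s ^ ((k : ℝ) / (N : ℝ) - 1) * (1 - s) ^ ((k : ℝ) / (N : ℝ)) *
              ((∏ i ∈ Finset.univ.erase (⟨n - 1, by omega⟩ : Fin n),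
                  ((1 : ℂ) - ((ln : ℂ) / lam i) * (s : ℂ))).re) ^
                ((k : ℝ) / (N : ℝ)) := by
  have hj : n - 1 < n := by omega
  set j : Fin n := ⟨n - 1, hj⟩ with hjdef
  set g : ℝ → ℂ := fun s => ∏ i ∈ Finset.univ.erase j, ((1 : ℂ) - ((ln : ℂ) / lam i) * (s : ℂ))
    with hgdef
  -- the key algebraic identity
  have hA : ∀ s : ℝ, ((f (ln * s) : ℝ) : ℂ) = ((-(c * ln * (s * (1 - s))) : ℝ) : ℂ) * g s := by
    intro s
    have h1 := hf (ln * s)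
    have hsplit : (∏ i, (((ln * s : ℝ) : ℂ) - lam i)) =
        (((ln * s : ℝ) : ℂ) - lam j) *
          ∏ i ∈ Finset.univ.erase j, (((ln * s : ℝ) : ℂ) - lam i) :=
      (Finset.mul_prod_erase _ _ (Finset.mem_univ j)).symm
    have h2 : (∏ i ∈ Finset.univ.erase j, (((ln * s : ℝ) : ℂ) - lam i)) =
        ((-1 : ℂ)) ^ (n - 1) * (∏ i ∈ Finset.univ.erase j, lam i) * g s := by
      have hfac : ∀ i ∈ Finset.univ.erase j, ((ln * s : ℝ) : ℂ) - lam i =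
          ((-1 : ℂ) * lam i) * ((1 : ℂ) - ((ln : ℂ) / lam i) * (s : ℂ)) := by
        intro i _
        have := hne i
        field_simp
        push_cast
        ring
      rw [Finset.prod_congr rfl hfac, Finset.prod_mul_distrib, Finset.prod_mul_distrib,
        Finset.prod_const, Finset.card_erase_of_mem (Finset.mem_univ j), Finset.card_univ,
        Fintype.card_fin]
    have hcQ : (c : ℂ) = (-1 : ℂ) ^ (n - 1) *
        ((ln : ℂ) * ∏ i ∈ Finset.univ.erase j, lam i) := by
      rw [hc, ← Finset.mul_prod_erase Finset.univ lam (Finset.mem_univ j), hlam]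
    rw [h1, hsplit, h2, hlam]
    push_cast
    linear_combination ((ln : ℂ) * s * (1 - s) * g s) * hcQ
  -- each factor of the product is nonzero on (0,1)
  have hnz : ∀ s : ℝ, 0 < s → s < 1 → g s ≠ 0 := by
    intro s hs0 hs1
    refine Finset.prod_ne_zero_iff.2 fun i hi => ?_
    intro hzero
    have hij : i ≠ j := (Finset.mem_erase.1 hi).1
    have hlami : lam i = ((ln * s : ℝ) : ℂ) := by
      rw [sub_eq_zero] at hzero
      field_simp at hzero
      rw [eq_div_iff (hne i)] at hzero
      push_cast
      first
      | exact hzero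
      | exact hzero.symm
      | linear_combination hzero
      | linear_combination -hzero
      | (push_cast at hzero; linear_combination hzero)
      | (push_cast at hzero; linear_combination -hzero)
    exact hother i hij (ln * s) hlami ⟨mul_pos hln0 hs0,
      by nlinarith⟩
  -- reality on (0,1)
  have hreal : ∀ s : ℝ, 0 < s → s < 1 → g s = (((g s).re : ℝ) : ℂ) := by
    intro s hs0 hs1
    have h1s : (0:ℝ) < 1 - s := by linarith
    have hdpos : (0:ℝ) < c * ln * (s * (1 - s)) := by positivity
    have hdC : ((c * ln * (s * (1 - s)) : ℝ) : ℂ) ≠ 0 := by exact_mod_cast hdpos.ne'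
    have hv : g s = ((-(f (ln * s)) / (c * ln * (s * (1 - s))) : ℝ) : ℂ) := by
      rw [eq_comm, Complex.ofReal_div, div_eq_iff hdC]
      have hA' := hA s
      push_cast at hA' ⊢
      linear_combination -hA'
    rw [hv, Complex.ofReal_re]
  -- positivity of the real part on (0,1)
  have hcont : Continuous fun s : ℝ => (g s).re := by
    exact Complex.continuous_re.comp
      (continuous_finset_prod _ fun i _ =>
        continuous_const.sub (continuous_const.mul Complex.continuous_ofReal))
  have hg0 : (g 0).re = 1 := by simp [hgdef]
  have hpos : ∀ s : ℝ, 0 < s → s < 1 → 0 < (g s).re := by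
    intro s hs0 hs1
    by_contra hle
    push_neg at hle
    have hsub : Set.Icc ((g s).re) ((g 0).re) ⊆ (fun x => (g x).re) '' Set.Icc 0 s :=
      intermediate_value_Icc' hs0.le hcont.continuousOn
    have h0mem : (0 : ℝ) ∈ Set.Icc ((g s).re) ((g 0).re) := by
      rw [hg0]; exact ⟨hle, zero_le_one⟩
    obtain ⟨x, hx, hx0⟩ := hsub h0mem
    have hx0' : (g x).re = 0 := hx0
    have hxpos : 0 < x := by
      rcases lt_or_eq_of_le hx.1 with h | h
      · exact h
      · exfalso; rw [← h] at hx0'; rw [hg0] at hx0'; norm_num at hx0'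
    have hx1 : x < 1 := lt_of_le_of_lt hx.2 hs1
    have : g x = 0 := by
      rw [hreal x hxpos hx1, hx0']; norm_num
    exact hnz x hxpos hx1 this
  have hP : ∀ s : ℝ, 0 < s → s < 1 → (g s).im = 0 ∧ 0 < (g s).re := by
    intro s hs0 hs1
    refine ⟨?_, hpos s hs0 hs1⟩
    have := hreal s hs0 hs1
    rw [this]; norm_num
  refine ⟨hP, ?_⟩
  intro k hk
  set r : ℝ := (k : ℝ) / (N : ℝ) with hrdef
  -- key real identity on (0,1)
  have hkey : ∀ s : ℝ, 0 < s → s < 1 →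
      -f (ln * s) = (c * ln) * (s * ((1 - s) * (g s).re)) := by
    intro s hs0 hs1
    have hA' := hA s
    rw [hreal s hs0 hs1] at hA'
    have : f (ln * s) = -(c * ln * (s * (1 - s))) * (g s).re := by
      exact_mod_cast hA'
    rw [this]; ring
  have h1 : (∫ t in Set.Ioo 0 ln, (-f t) ^ r / t) = ∫ t in (0:ℝ)..ln, (-f t) ^ r / t := by
    rw [intervalIntegral.integral_of_le hln0.le, MeasureTheory.integral_Ioc_eq_integral_Ioo]
  have h2 : ln • (∫ s in (0:ℝ)..1, (-f (ln * s)) ^ r / (ln * s)) =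
      ∫ t in (0:ℝ)..ln, (-f t) ^ r / t := by
    have := intervalIntegral.smul_integral_comp_mul_left (a := 0) (b := 1)
      (fun t => (-f t) ^ r / t) ln
    simpa using this
  have h3 : ln • (∫ s in (0:ℝ)..1, (-f (ln * s)) ^ r / (ln * s)) =
      ∫ s in Set.Ioo (0:ℝ) 1, ln * ((-f (ln * s)) ^ r / (ln * s)) := by
    rw [intervalIntegral.integral_of_le zero_le_one, MeasureTheory.integral_Ioc_eq_integral_Ioo,
      ← MeasureTheory.integral_smul]
    simp [smul_eq_mul]
  have h4 : (∫ s in Set.Ioo (0:ℝ) 1, ln * ((-f (ln * s)) ^ r / (ln * s))) =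
      ∫ s in Set.Ioo (0:ℝ) 1, (c * ln) ^ r * (s ^ (r - 1) * (1 - s) ^ r * ((g s).re) ^ r) := by
    apply MeasureTheory.setIntegral_congr_fun measurableSet_Ioo
    intro s hs
    obtain ⟨hs0, hs1⟩ := hs
    have hps := hpos s hs0 hs1
    have h1s : (0:ℝ) < 1 - s := by linarith
    simp only
    rw [hkey s hs0 hs1]
    rw [Real.mul_rpow (by positivity) (by positivity),
      Real.mul_rpow hs0.le (by positivity),
      Real.mul_rpow h1s.le (by positivity),
      Real.rpow_sub hs0, Real.rpow_one]
    field_simp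
  have h5 : (∫ s in Set.Ioo (0:ℝ) 1,
        (c * ln) ^ r * (s ^ (r - 1) * (1 - s) ^ r * ((g s).re) ^ r)) =
      (c * ln) ^ r * ∫ s in Set.Ioo (0:ℝ) 1, s ^ (r - 1) * (1 - s) ^ r * ((g s).re) ^ r :=
    MeasureTheory.integral_const_mul _ _
  rw [h1, ← h2, h3, h4, h5]
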